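/- Let δ ∈ ℤ, let λ and μ be bipartitions, and let i < j be integers such that i ∈ I_∨(λ, δ) \ I_∧(λ) and j ∈ I_∧(λ) \ I_∨(λ, δ). Suppose that I_∧(μ) = (I_∧(λ) \ {j}) ∪ {i} and I_∨(μ, δ) = (I_∨(λ, δ) \ {i}) ∪ {j} (i.e. μ is obtained from λ by swapping the labels of the ∨∧-pair (i, j)). Then |μ•| = |λ•| + i − j and |μ°| = |λ°| + i − j (equalities of integers). -/

import Mathlib

/-! Partitions are encoded as antitone, eventually-zero functions `f : ℕ → ℕ`, where
`f k` is the `(k+1)`-st part (so indices are shifted by one compared to the usual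
one-based convention). -/

/-- `I_∧(λ) = { λ•ₖ − k + 1 : k ≥ 1 }` for the partition `λ•` encoded by `f`
(with `f k = λ•_{k+1}` this is `{ f k − k : k ∈ ℕ }`). -/
def wedgeSet (f : ℕ → ℕ) : Set ℤ :=
  {x | ∃ k : ℕ, x = (f k : ℤ) - k}

/-- `I_∨(λ, δ) = { k − δ − λ°ₖ : k ≥ 1 }` for the partition `λ°` encoded by `g`
(with `g k = λ°_{k+1}` this is `{ (k+1) − δ − g k : k ∈ ℕ }`). -/
def veeSet (δ : ℤ) (g : ℕ → ℕ) : Set ℤ :=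
  {x | ∃ k : ℕ, x = ((k : ℤ) + 1) - δ - g k}

/-- The size `|α| = Σₖ αₖ` of a partition, as an integer. -/
noncomputable def psize (f : ℕ → ℕ) : ℤ :=
  ∑ᶠ k, (f k : ℤ)

/-- if the bipartition `μ = (μ•, μ°)` is obtained from `λ = (λ•, λ°)` by
swapping the labels of a `∨∧`-pair `(i, j)` (so `i < j`, `i ∈ I_∨(λ,δ) \ I_∧(λ)`,
`j ∈ I_∧(λ) \ I_∨(λ,δ)`, `I_∧(μ) = (I_∧(λ) \ {j}) ∪ {i}` and
`I_∨(μ,δ) = (I_∨(λ,δ) \ {i}) ∪ {j}`), then `|μ•| = |λ•| + i − j` and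
`|μ°| = |λ°| + i − j`. -/
lemma psize_eq_sum (f : ℕ → ℕ) (N K : ℕ) (h0 : ∀ k, N ≤ k → f k = 0) (hNK : N ≤ K) :
    psize f = ∑ k ∈ Finset.range K, (f k : ℤ) := by
  apply finsum_eq_finset_sum_of_support_subset
  intro k hk
  simp only [Function.mem_support, ne_eq] at hk
  simp only [Finset.coe_range, Set.mem_Iio]
  by_contra h
  exact hk (by rw [h0 k (le_trans hNK (le_of_not_gt h))]; simp)

lemma wedge_finset_mem (f : ℕ → ℕ) (N K : ℕ) (h0 : ∀ k, N ≤ k → f k = 0) (hNK : N ≤ K)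
    (x : ℤ) :
    x ∈ (Finset.range K).image (fun k => (f k : ℤ) - k) ↔ x ∈ wedgeSet f ∧ 1 - K ≤ x := by
  simp only [Finset.mem_image, Finset.mem_range]
  constructor
  · rintro ⟨k, hk, rfl⟩
    refine ⟨⟨k, rfl⟩, ?_⟩
    have : (0:ℤ) ≤ f k := Int.natCast_nonneg _
    omega
  · rintro ⟨⟨k, rfl⟩, h2⟩
    refine ⟨k, ?_, rfl⟩
    by_contra h
    have hfk : f k = 0 := h0 k (le_trans hNK (le_of_not_gt h))
    rw [hfk] at h2
    simp at h2
    omega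

lemma wedge_sum (f : ℕ → ℕ) (N K : ℕ) (hf : Antitone f) (h0 : ∀ k, N ≤ k → f k = 0)
    (hNK : N ≤ K) :
    ∑ x ∈ (Finset.range K).image (fun k => (f k : ℤ) - k), x
      = psize f - ∑ k ∈ Finset.range K, (k : ℤ) := by
  rw [Finset.sum_image, psize_eq_sum f N K h0 hNK, ← Finset.sum_sub_distrib]
  intro a _ b _ hab
  beta_reduce at hab
  by_contra hne
  rcases lt_or_gt_of_ne hne with h | h
  · have h1 : f b ≤ f a := hf h.le
    have h1' : (f b : ℤ) ≤ f a := by exact_mod_cast h1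
    have : (a:ℤ) < b := by exact_mod_cast h
    omega
  · have h1 : f a ≤ f b := hf h.le
    have h1' : (f a : ℤ) ≤ f b := by exact_mod_cast h1
    have : (b:ℤ) < a := by exact_mod_cast h
    omega

lemma vee_finset_mem (δ : ℤ) (g : ℕ → ℕ) (N K : ℕ) (h0 : ∀ k, N ≤ k → g k = 0)
    (hNK : N ≤ K) (x : ℤ) :
    x ∈ (Finset.range K).image (fun k : ℕ => ((k : ℤ) + 1) - δ - (g k : ℤ))
      ↔ x ∈ veeSet δ g ∧ x ≤ (K : ℤ) - δ := by
  simp only [Finset.mem_image, Finset.mem_range]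
  constructor
  · rintro ⟨k, hk, rfl⟩
    refine ⟨⟨k, rfl⟩, ?_⟩
    have : (0:ℤ) ≤ g k := Int.natCast_nonneg _
    omega
  · rintro ⟨⟨k, rfl⟩, h2⟩
    refine ⟨k, ?_, rfl⟩
    by_contra h
    have hgk : g k = 0 := h0 k (le_trans hNK (le_of_not_gt h))
    rw [hgk] at h2
    simp at h2
    have : (K:ℤ) ≤ k := by exact_mod_cast le_of_not_gt h
    omega

lemma vee_sum (δ : ℤ) (g : ℕ → ℕ) (N K : ℕ) (hg : Antitone g) (h0 : ∀ k, N ≤ k → g k = 0)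
    (hNK : N ≤ K) :
    ∑ x ∈ (Finset.range K).image (fun k : ℕ => ((k : ℤ) + 1) - δ - (g k : ℤ)), x
      = (∑ k ∈ Finset.range K, ((k : ℤ) + 1 - δ)) - psize g := by
  rw [Finset.sum_image, psize_eq_sum g N K h0 hNK, ← Finset.sum_sub_distrib]
  intro a _ b _ hab
  beta_reduce at hab
  by_contra hne
  rcases lt_or_gt_of_ne hne with h | h
  · have h1 : g b ≤ g a := hg h.le
    have h1' : (g b : ℤ) ≤ g a := by exact_mod_cast h1
    have : (a:ℤ) < b := by exact_mod_cast h
    omega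
  · have h1 : g a ≤ g b := hg h.le
    have h1' : (g a : ℤ) ≤ g b := by exact_mod_cast h1
    have : (b:ℤ) < a := by exact_mod_cast h
    omega

theorem size_of_swap_vee_wedge_pair
    (δ : ℤ) (lb lw mb mw : ℕ → ℕ)
    (hlb : Antitone lb) (hlw : Antitone lw) (hmb : Antitone mb) (hmw : Antitone mw)
    (hlb0 : ∃ N, ∀ k, N ≤ k → lb k = 0) (hlw0 : ∃ N, ∀ k, N ≤ k → lw k = 0)
    (hmb0 : ∃ N, ∀ k, N ≤ k → mb k = 0) (hmw0 : ∃ N, ∀ k, N ≤ k → mw k = 0)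
    (i j : ℤ) (hij : i < j)
    (hi : i ∈ veeSet δ lw \ wedgeSet lb)
    (hj : j ∈ wedgeSet lb \ veeSet δ lw)
    (hwedge : wedgeSet mb = (wedgeSet lb \ {j}) ∪ {i})
    (hvee : veeSet δ mw = (veeSet δ lw \ {i}) ∪ {j}) :
    psize mb = psize lb + i - j ∧ psize mw = psize lw + i - j := by
  obtain ⟨Nlb, hlb0⟩ := hlb0
  obtain ⟨Nlw, hlw0⟩ := hlw0
  obtain ⟨Nmb, hmb0⟩ := hmb0
  obtain ⟨Nmw, hmw0⟩ := hmw0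
  set K := Nlb.max (Nmb.max (Nlw.max (Nmw.max ((1 - i).toNat.max ((j + δ).toNat))))) with hKdef
  have hK1 : Nlb ≤ K := Nat.le_max_left _ _
  have hK2 : Nmb ≤ K := le_trans (Nat.le_max_left _ _) (Nat.le_max_right _ _)
  have hK3 : Nlw ≤ K :=
    le_trans (le_trans (Nat.le_max_left _ _) (Nat.le_max_right _ _)) (Nat.le_max_right _ _)
  have hK4 : Nmw ≤ K :=
    le_trans (le_trans (le_trans (Nat.le_max_left _ _) (Nat.le_max_right _ _))
      (Nat.le_max_right _ _)) (Nat.le_max_right _ _)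
  have hK5 : (1 - i).toNat ≤ K :=
    le_trans (le_trans (le_trans (le_trans (Nat.le_max_left _ _) (Nat.le_max_right _ _))
      (Nat.le_max_right _ _)) (Nat.le_max_right _ _)) (Nat.le_max_right _ _)
  have hK6 : (j + δ).toNat ≤ K :=
    le_trans (le_trans (le_trans (le_trans (Nat.le_max_right _ _) (Nat.le_max_right _ _))
      (Nat.le_max_right _ _)) (Nat.le_max_right _ _)) (Nat.le_max_right _ _)
  have hK5' : ((1 - i).toNat : ℤ) ≤ K := by exact_mod_cast hK5
  have hK6' : ((j + δ).toNat : ℤ) ≤ K := by exact_mod_cast hK6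
  have hKi : 1 - (K : ℤ) ≤ i := by omega
  have hKj : j ≤ (K : ℤ) - δ := by omega
  constructor
  · -- black part
    set A := (Finset.range K).image (fun k => (lb k : ℤ) - k) with hA
    set B := (Finset.range K).image (fun k => (mb k : ℤ) - k) with hB
    have hAmem := wedge_finset_mem lb Nlb K hlb0 hK1
    have hBmem := wedge_finset_mem mb Nmb K hmb0 hK2
    have hjA : j ∈ A := (hAmem j).2 ⟨hj.1, by omega⟩
    have hiA : i ∉ A := fun h => hi.2 ((hAmem i).1 h).1
    have hBeq : B = insert i (A.erase j) := by
      ext x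
      rw [hBmem x, Finset.mem_insert, Finset.mem_erase, hAmem x, hwedge]
      simp only [Set.mem_union, Set.mem_diff, Set.mem_singleton_iff]
      constructor
      · rintro ⟨h1 | rfl, h2⟩
        · exact Or.inr ⟨h1.2, h1.1, h2⟩
        · exact Or.inl rfl
      · rintro (rfl | ⟨hne, hx, h2⟩)
        · exact ⟨Or.inr rfl, hKi⟩
        · exact ⟨Or.inl ⟨hx, hne⟩, h2⟩
    have hsumB : ∑ x ∈ B, x = i + (∑ x ∈ A, x - j) := by
      rw [hBeq, Finset.sum_insert (fun h => hiA (Finset.mem_of_mem_erase h)),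
        Finset.sum_erase_eq_sub hjA]
    have e1 : ∑ x ∈ B, x = psize mb - ∑ k ∈ Finset.range K, (k : ℤ) :=
      wedge_sum mb Nmb K hmb hmb0 hK2
    have e2 : ∑ x ∈ A, x = psize lb - ∑ k ∈ Finset.range K, (k : ℤ) :=
      wedge_sum lb Nlb K hlb hlb0 hK1
    omega
  · -- white part
    set A := (Finset.range K).image (fun k : ℕ => ((k : ℤ) + 1) - δ - (lw k : ℤ)) with hA
    set B := (Finset.range K).image (fun k : ℕ => ((k : ℤ) + 1) - δ - (mw k : ℤ)) with hB
    have hAmem := vee_finset_mem δ lw Nlw K hlw0 hK3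
    have hBmem := vee_finset_mem δ mw Nmw K hmw0 hK4
    have hiA : i ∈ A := (hAmem i).2 ⟨hi.1, by omega⟩
    have hjA : j ∉ A := fun h => hj.2 ((hAmem j).1 h).1
    have hBeq : B = insert j (A.erase i) := by
      ext x
      rw [hBmem x, Finset.mem_insert, Finset.mem_erase, hAmem x, hvee]
      simp only [Set.mem_union, Set.mem_diff, Set.mem_singleton_iff]
      constructor
      · rintro ⟨h1 | rfl, h2⟩
        · exact Or.inr ⟨h1.2, h1.1, h2⟩
        · exact Or.inl rfl
      · rintro (rfl | ⟨hne, hx, h2⟩)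
        · exact ⟨Or.inr rfl, hKj⟩
        · exact ⟨Or.inl ⟨hx, hne⟩, h2⟩
    have hsumB : ∑ x ∈ B, x = j + (∑ x ∈ A, x - i) := by
      rw [hBeq, Finset.sum_insert (fun h => hjA (Finset.mem_of_mem_erase h)),
        Finset.sum_erase_eq_sub hiA]
    have e1 : ∑ x ∈ B, x = (∑ k ∈ Finset.range K, ((k : ℤ) + 1 - δ)) - psize mw :=
      vee_sum δ mw Nmw K hmw hmw0 hK4
    have e2 : ∑ x ∈ A, x = (∑ k ∈ Finset.range K, ((k : ℤ) + 1 - δ)) - psize lw :=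
      vee_sum δ lw Nlw K hlw hlw0 hK3
    omega
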